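/- For every $x>0$, the identity $Dk(x) + \frac{1}{2}k(x)^2 = \dfrac{2m}{x^3}\,\psi(x)^{-6}$ holds; consequently, since $m > 0$, one has $Dk(x) + \frac{1}{2}k(x)^2 > 0$ for all $x>0$. -/

import Mathlib

/-- Constant-mean-curvature slice of Schwarzschild–deSitter: for every `x > 0`,
`Dk x + (1/2) k(x)² = (2m/x³) ψ(x)⁻⁶`; consequently, since `m > 0`,
`Dk x + (1/2) k(x)² > 0` for all `x > 0`. -/
theorem cmc_slice_quasilocal_identity (m : ℝ) (hm : 0 < m)
    (ψ k Dk : ℝ → ℝ)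
    (hψ : ∀ x, ψ x = 1 + m/(2*x))
    (hk : ∀ x, k x = (2/x) * (1 - m/(2*x)) / (ψ x)^3)
    (hDk : ∀ x, Dk x = (ψ x)⁻¹^2 * deriv k x) :
    ∀ x : ℝ, 0 < x →
      Dk x + (1/2) * (k x)^2 = (2*m/x^3) * ((ψ x)^6)⁻¹ ∧
      0 < Dk x + (1/2) * (k x)^2 := by
  intro x hx
  have hs : (0:ℝ) < 2*x + m := by linarith
  have hs' : (2*x + m) ≠ 0 := ne_of_gt hs
  -- k agrees near x with the rational function h
  set h : ℝ → ℝ := fun y => (16*y^2 - 8*m*y) / (2*y + m)^3 with hh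
  have he : k =ᶠ[nhds x] h := by
    filter_upwards [eventually_gt_nhds hx] with y hy
    have hy' : y ≠ 0 := ne_of_gt hy
    have hys : (2*y + m) ≠ 0 := by positivity
    rw [hk, hψ, hh]
    field_simp
    ring
  have hderiv : HasDerivAt h
      (((32*x - 8*m) * (2*x+m)^3 - (16*x^2 - 8*m*x) * (3*(2*x+m)^2*2)) / ((2*x+m)^3)^2) x := by
    have h1 : HasDerivAt (fun y : ℝ => 16*y^2 - 8*m*y) (32*x - 8*m) x := by
      have : HasDerivAt (fun y : ℝ => 16*y^2 - 8*m*y) (16 * (((2:ℕ):ℝ) * x ^ (2 - 1)) - 8 * m * 1) x := ((hasDerivAt_pow 2 x).const_mul 16).fun_sub ((hasDerivAt_id x).const_mul (8*m))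
      convert this using 1
      ring
    have h2 : HasDerivAt (fun y : ℝ => (2*y + m)^3) (3*(2*x+m)^2*2) x := by
      have hb : HasDerivAt (fun y : ℝ => 2*y + m) 2 x := by
        simpa using ((hasDerivAt_id x).const_mul 2).add_const m
      simpa using (hb.fun_pow 3)
    exact h1.div h2 (pow_ne_zero 3 hs')
  have hdk : deriv k x =
      ((32*x - 8*m) * (2*x+m)^3 - (16*x^2 - 8*m*x) * (3*(2*x+m)^2*2)) / ((2*x+m)^3)^2 := by
    rw [he.deriv_eq, hderiv.deriv]
  have hx' : x ≠ 0 := ne_of_gt hx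
  have hident : Dk x + (1/2) * (k x)^2 = (2*m/x^3) * ((ψ x)^6)⁻¹ := by
    rw [hDk, hdk, hk, hψ]
    field_simp
    ring
  refine ⟨hident, ?_⟩
  rw [hident, hψ]
  have hψpos : (0:ℝ) < 1 + m/(2*x) := by positivity
  positivity
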